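/- Let u, w be real constants with u² + w² = 1, suppose uκ − wτ > 0 on I, and let γ_V be the integral curve of V = uT + wB (so γ_V′ = uT + wB), whose curvature and torsion are κ_V = uκ − wτ and τ_V = wκ + uτ. Then there exist constants (λ, μ) ≠ (0, 0) with λκ + μτ = 1 identically on I if and only if there exist constants (λ̄, μ̄) ≠ (0, 0) with λ̄κ_V + μ̄τ_V = 1 identically on I; explicitly one may take λ̄ = λu − μw and μ̄ = λw + μu. In particular γ is a Bertrand or B-Bertrand curve if and only if γ_V is. -/

import Mathlib

open scoped RealInnerProductSpace

noncomputable def cross3 (x y : EuclideanSpace ℝ (Fin 3)) : EuclideanSpace ℝ (Fin 3) :=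
  WithLp.toLp 2 ![x 1 * y 2 - x 2 * y 1, x 2 * y 0 - x 0 * y 2, x 0 * y 1 - x 1 * y 0]

/-- With κ_V = uκ - wτ and τ_V = wκ + uτ (u² + w² = 1, uκ - wτ > 0),
there are constants (λ, μ) ≠ (0,0) with λκ + μτ = 1 iff there are (λ̄, μ̄) ≠ (0,0)
with λ̄κ_V + μ̄τ_V = 1; explicitly λ̄ = λu - μw, μ̄ = λw + μu. -/
theorem stmt_9 (a b : ℝ) (γ T N B : ℝ → EuclideanSpace ℝ (Fin 3)) (κ τ : ℝ → ℝ)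
    (hγT : ∀ s ∈ Set.Ioo a b, HasDerivAt γ (T s) s)
    (hT1 : ∀ s ∈ Set.Ioo a b, ‖T s‖ = 1)
    (hN1 : ∀ s ∈ Set.Ioo a b, ‖N s‖ = 1)
    (hB1 : ∀ s ∈ Set.Ioo a b, ‖B s‖ = 1)
    (hTN : ∀ s ∈ Set.Ioo a b, ⟪T s, N s⟫ = 0)
    (hTB : ∀ s ∈ Set.Ioo a b, ⟪T s, B s⟫ = 0)
    (hNB : ∀ s ∈ Set.Ioo a b, ⟪N s, B s⟫ = 0)
    (horient : ∀ s ∈ Set.Ioo a b, B s = cross3 (T s) (N s))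
    (hκpos : ∀ s ∈ Set.Ioo a b, 0 < κ s)
    (hTder : ∀ s ∈ Set.Ioo a b, HasDerivAt T (κ s • N s) s)
    (hNder : ∀ s ∈ Set.Ioo a b, HasDerivAt N ((-κ s) • T s + τ s • B s) s)
    (hBder : ∀ s ∈ Set.Ioo a b, HasDerivAt B ((-τ s) • N s) s)
    (u w : ℝ) (huw : u ^ 2 + w ^ 2 = 1)
    (hκV : ∀ s ∈ Set.Ioo a b, 0 < u * κ s - w * τ s)
    (γV : ℝ → EuclideanSpace ℝ (Fin 3))
    (hγV : ∀ s ∈ Set.Ioo a b, HasDerivAt γV (u • T s + w • B s) s) :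
    ((∃ lam μ : ℝ, ¬(lam = 0 ∧ μ = 0) ∧ ∀ s ∈ Set.Ioo a b, lam * κ s + μ * τ s = 1) ↔
      (∃ lam' μ' : ℝ, ¬(lam' = 0 ∧ μ' = 0) ∧
        ∀ s ∈ Set.Ioo a b, lam' * (u * κ s - w * τ s) + μ' * (w * κ s + u * τ s) = 1)) ∧
    (∀ lam μ : ℝ, (∀ s ∈ Set.Ioo a b, lam * κ s + μ * τ s = 1) →
      ∀ s ∈ Set.Ioo a b,
        (lam * u - μ * w) * (u * κ s - w * τ s) +
          (lam * w + μ * u) * (w * κ s + u * τ s) = 1) := by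
  constructor
  · constructor
    · rintro ⟨l, m, hne, h⟩
      refine ⟨l * u - m * w, l * w + m * u, ?_, fun s hs => ?_⟩
      · rintro ⟨h1, h2⟩
        exact hne ⟨by linear_combination u * h1 + w * h2 - l * huw,
          by linear_combination (-w) * h1 + u * h2 - m * huw⟩
      · have := h s hs; nlinarith
    · rintro ⟨l, m, hne, h⟩
      refine ⟨l * u + m * w, -(l * w) + m * u, ?_, fun s hs => ?_⟩
      · rintro ⟨h1, h2⟩
        exact hne ⟨by linear_combination u * h1 - w * h2 - l * huw,
          by linear_combination w * h1 + u * h2 - m * huw⟩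
      · have := h s hs; nlinarith
  · intro l m h s hs
    have := h s hs; nlinarith
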